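/- The image of a constructible subset of ℂ^d under a polynomial map ℂ^d → ℂ^n is a constructible subset of ℂ^n. -/

import Mathlib

open Polynomial

namespace Chev

/-- A basic locally closed-ish piece: common zeros of a finite set, minus zeros of `g`. -/
def piece {k : ℕ} (F : Finset (MvPolynomial (Fin k) ℂ)) (g : MvPolynomial (Fin k) ℂ) :
    Set (Fin k → ℂ) :=
  {x | (∀ f ∈ F, MvPolynomial.eval x f = 0) ∧ MvPolynomial.eval x g ≠ 0}

/-- Constructible: a finite union of pieces. -/
def Con {k : ℕ} (s : Set (Fin k → ℂ)) : Prop :=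
  ∃ 𝒮 : Finset (Finset (MvPolynomial (Fin k) ℂ) × MvPolynomial (Fin k) ℂ),
    s = ⋃ p ∈ 𝒮, piece p.1 p.2

lemma Con.empty {k : ℕ} : Con (∅ : Set (Fin k → ℂ)) := ⟨∅, by simp⟩

lemma con_piece {k : ℕ} (F : Finset (MvPolynomial (Fin k) ℂ)) (g : MvPolynomial (Fin k) ℂ) :
    Con (piece F g) := ⟨{(F, g)}, by simp⟩

lemma Con.union {k : ℕ} {s t : Set (Fin k → ℂ)} (hs : Con s) (ht : Con t) : Con (s ∪ t) := by
  obtain ⟨S, rfl⟩ := hs; obtain ⟨T, rfl⟩ := ht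
  exact ⟨S ∪ T, by rw [Finset.set_biUnion_union]⟩

lemma piece_inter_piece {k : ℕ} (F₁ F₂ : Finset (MvPolynomial (Fin k) ℂ))
    (g₁ g₂ : MvPolynomial (Fin k) ℂ) :
    piece F₁ g₁ ∩ piece F₂ g₂ = piece (F₁ ∪ F₂) (g₁ * g₂) := by
  ext x
  simp only [piece, Set.mem_inter_iff, Set.mem_setOf_eq, Finset.mem_union, map_mul, mul_ne_zero_iff]
  constructor
  · rintro ⟨⟨h1, h2⟩, ⟨h3, h4⟩⟩
    exact ⟨fun f hf => hf.elim (h1 f) (h3 f), h2, h4⟩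
  · rintro ⟨h, h2, h4⟩
    exact ⟨⟨fun f hf => h f (Or.inl hf), h2⟩, fun f hf => h f (Or.inr hf), h4⟩

lemma Con.inter {k : ℕ} {s t : Set (Fin k → ℂ)} (hs : Con s) (ht : Con t) : Con (s ∩ t) := by
  obtain ⟨S, rfl⟩ := hs; obtain ⟨T, rfl⟩ := ht
  refine ⟨(S ×ˢ T).image (fun p => (p.1.1 ∪ p.2.1, p.1.2 * p.2.2)), ?_⟩
  ext x
  simp only [Set.mem_inter_iff, Set.mem_iUnion, Finset.mem_image, Finset.mem_product]
  constructor
  · rintro ⟨⟨p, hp, hxp⟩, ⟨q, hq, hxq⟩⟩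
    refine ⟨(p.1 ∪ q.1, p.2 * q.2), ⟨(p, q), ⟨hp, hq⟩, rfl⟩, ?_⟩
    rw [← piece_inter_piece]; exact ⟨hxp, hxq⟩
  · rintro ⟨pq, ⟨⟨p, q⟩, ⟨hp, hq⟩, rfl⟩, hx⟩
    rw [← piece_inter_piece] at hx
    exact ⟨⟨p, hp, hx.1⟩, ⟨q, hq, hx.2⟩⟩

/-- finite unions indexed by a Finset of an arbitrary type -/
lemma Con.biUnion {k : ℕ} {ι : Type*} (t : Finset ι) (f : ι → Set (Fin k → ℂ))
    (h : ∀ i ∈ t, Con (f i)) : Con (⋃ i ∈ t, f i) := by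
  classical
  induction t using Finset.induction with
  | empty => simpa using Con.empty
  | insert _ _ hnotmem ih =>
    rw [Finset.set_biUnion_insert]
    exact (h _ (Finset.mem_insert_self _ _)).union
      (ih fun i hi => h i (Finset.mem_insert_of_mem hi))

lemma Con.iUnion_fin {k m : ℕ} (f : Fin m → Set (Fin k → ℂ))
    (h : ∀ i, Con (f i)) : Con (⋃ i, f i) := by
  have : (⋃ i, f i) = ⋃ i ∈ Finset.univ, f i := by simp
  rw [this]; exact Con.biUnion _ _ (fun i _ => h i)

variable {R : Type*} [CommRing R] [IsDomain R]

/-- Pseudo-division: dividing `h` by a nonconstant `f` after scaling by a power of the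
leading coefficient of `f`. -/
lemma pseudo_div (f : R[X]) (hf : 0 < f.natDegree) (h : R[X]) :
    ∃ (e : ℕ) (q r : R[X]), C f.leadingCoeff ^ e * h = q * f + r ∧ r.degree < f.degree := by
  have hf0 : f ≠ 0 := fun h0 => by simp [h0] at hf
  have hc0 : f.leadingCoeff ≠ 0 := leadingCoeff_ne_zero.2 hf0
  generalize hn : h.natDegree = n
  induction n using Nat.strong_induction_on generalizing h with
  | _ n ih =>
  by_cases hdeg : h.degree < f.degree
  · exact ⟨0, 0, h, by simp, hdeg⟩
  push_neg at hdeg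
  have hh0 : h ≠ 0 := by
    intro h0
    rw [h0, degree_zero] at hdeg
    exact absurd (le_antisymm hdeg bot_le) (by simpa [degree_eq_bot] using hf0)
  have hdl : f.natDegree ≤ h.natDegree := natDegree_le_natDegree hdeg
  set c := f.leadingCoeff with hc
  set h' := C c * h - C h.leadingCoeff * X ^ (h.natDegree - f.natDegree) * f with hh'
  have hdch : (C c * h).degree = h.degree := by
    rw [degree_C_mul hc0]
  have hdder : (C h.leadingCoeff * X ^ (h.natDegree - f.natDegree) * f).degree = h.degree := by
    rw [degree_mul, degree_mul, degree_C (leadingCoeff_ne_zero.2 hh0), degree_X_pow,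
      degree_eq_natDegree hf0, degree_eq_natDegree hh0]
    rw [zero_add]
    norm_cast
    omega
  have hlc : (C c * h).leadingCoeff
      = (C h.leadingCoeff * X ^ (h.natDegree - f.natDegree) * f).leadingCoeff := by
    rw [leadingCoeff_mul, leadingCoeff_mul, leadingCoeff_mul, leadingCoeff_C, leadingCoeff_C,
      leadingCoeff_X_pow, mul_one, mul_comm]
  have hdlt : h'.degree < h.degree := by
    rw [hh']
    calc (C c * h - _).degree < (C c * h).degree :=
          degree_sub_lt (by rw [hdch, hdder]) (by
            simp only [ne_eq, mul_eq_zero, C_eq_zero, not_or]; exact ⟨hc0, hh0⟩) hlc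
      _ = h.degree := hdch
  -- get recursion
  rcases eq_or_ne h' 0 with h'0 | h'0
  · refine ⟨1, C h.leadingCoeff * X ^ (h.natDegree - f.natDegree), 0, ?_, by
      rw [degree_zero]
      exact bot_lt_iff_ne_bot.2 (by simpa [degree_eq_bot] using hf0)⟩
    have := sub_eq_zero.1 (hh' ▸ h'0 : C c * h - _ = 0)
    rw [pow_one, this, add_zero]
  · have hlt : h'.natDegree < n := by
      rw [← hn]
      exact natDegree_lt_natDegree h'0 hdlt
    obtain ⟨e, q, r, heq, hr⟩ := ih h'.natDegree hlt h' rfl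
    refine ⟨e + 1, q + C c ^ e * (C h.leadingCoeff * X ^ (h.natDegree - f.natDegree)), r, ?_, hr⟩
    have : C c * h = h' + C h.leadingCoeff * X ^ (h.natDegree - f.natDegree) * f := by
      rw [hh']; ring
    rw [pow_succ, mul_assoc, this, mul_add, heq]
    ring
variable {K : Type*} [Field K] [IsAlgClosed K] [DecidableEq K]

lemma exists_root_escape (f g : K[X]) (hf : 0 < f.natDegree) :
    (∃ y, f.eval y = 0 ∧ g.eval y ≠ 0) ↔ ¬ f ∣ g ^ f.natDegree := by
  have hf0 : f ≠ 0 := fun h0 => by simp [h0] at hf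
  constructor
  · rintro ⟨y, hy, hgy⟩ hdvd
    have : (g ^ f.natDegree).eval y = 0 := by
      obtain ⟨q, hq⟩ := hdvd
      rw [hq, eval_mul, hy, zero_mul]
    rw [eval_pow, pow_eq_zero_iff hf.ne'] at this
    exact hgy this
  · intro hdvd
    by_contra hne
    push_neg at hne
    apply hdvd
    rcases eq_or_ne g 0 with rfl | hg0
    · rw [zero_pow hf.ne']; exact dvd_zero f
    refine (IsAlgClosed.splits (k := K) f).dvd_of_roots_le_roots hf0 ?_
    rw [Multiset.le_iff_count]
    intro a
    rcases eq_or_ne (Multiset.count a f.roots) 0 with h0 | h0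
    · simp [h0]
    have ha : f.IsRoot a := by
      have : a ∈ f.roots := Multiset.count_pos.1 (Nat.pos_of_ne_zero h0)
      exact (mem_roots hf0).1 this
    have hga : g.eval a = 0 := hne a ha
    have h1 : 1 ≤ Multiset.count a g.roots := by
      rw [Nat.one_le_iff_ne_zero, ← Nat.pos_iff_ne_zero, Multiset.count_pos]
      exact (mem_roots hg0).2 hga
    calc Multiset.count a f.roots ≤ Multiset.card f.roots := Multiset.count_le_card a _
      _ ≤ f.natDegree := f.card_roots'
      _ = f.natDegree * 1 := (mul_one _).symm
      _ ≤ f.natDegree * Multiset.count a g.roots := by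
          exact Nat.mul_le_mul_left _ h1
      _ = Multiset.count a (g ^ f.natDegree).roots := by
          rw [roots_pow, Multiset.count_nsmul]

variable {k : ℕ}

/-- Map a polynomial over `MvPolynomial` to `ℂ[X]` by evaluating coefficients at `x`. -/
noncomputable def pmap (x : Fin k → ℂ) (f : Polynomial (MvPolynomial (Fin k) ℂ)) : ℂ[X] :=
  f.map (MvPolynomial.eval x)

lemma pmap_eval_zero_iff (x : Fin k → ℂ) (g : Polynomial (MvPolynomial (Fin k) ℂ)) :
    pmap x g = 0 ↔ ∀ n ∈ g.support, MvPolynomial.eval x (g.coeff n) = 0 := by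
  constructor
  · intro h n _
    have := congrArg (fun p => Polynomial.coeff p n) h
    simpa [pmap, coeff_map] using this
  · intro h
    ext n
    simp only [pmap, coeff_map, coeff_zero]
    by_cases hn : n ∈ g.support
    · exact h n hn
    · rw [Polynomial.notMem_support_iff.1 hn, map_zero]

/-- The set where `pmap x g` is a nonzero polynomial. -/
lemma pmap_ne_zero_iff (x : Fin k → ℂ) (g : Polynomial (MvPolynomial (Fin k) ℂ)) :
    pmap x g ≠ 0 ↔ ∃ n ∈ g.support, MvPolynomial.eval x (g.coeff n) ≠ 0 := by
  rw [Ne, pmap_eval_zero_iff]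
  push_neg
  rfl

lemma exists_eval_ne_iff (q : ℂ[X]) : (∃ y : ℂ, q.eval y ≠ 0) ↔ q ≠ 0 := by
  constructor
  · rintro ⟨y, hy⟩ rfl
    simp at hy
  · intro hq
    by_contra h
    push_neg at h
    exact hq (zero_of_eval_zero q h)

/-- The "existential" set that we must show constructible. -/
def E (L : List (Polynomial (MvPolynomial (Fin k) ℂ)))
    (g : Polynomial (MvPolynomial (Fin k) ℂ)) : Set (Fin k → ℂ) :=
  {x | ∃ y : ℂ, (∀ f ∈ L, (pmap x f).eval y = 0) ∧ (pmap x g).eval y ≠ 0}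

lemma E_congr {L L' : List (Polynomial (MvPolynomial (Fin k) ℂ))}
    (h : ∀ f, f ∈ L ↔ f ∈ L') (g : Polynomial (MvPolynomial (Fin k) ℂ)) : E L g = E L' g := by
  unfold E
  ext x
  constructor
  · rintro ⟨y, hy, hg⟩
    exact ⟨y, fun f hf => hy f ((h f).mpr hf), hg⟩
  · rintro ⟨y, hy, hg⟩
    exact ⟨y, fun f hf => hy f ((h f).mp hf), hg⟩

abbrev Poly (k : ℕ) := Polynomial (MvPolynomial (Fin k) ℂ)

lemma piece_singleton (c : MvPolynomial (Fin k) ℂ) :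
    piece {c} (1 : MvPolynomial (Fin k) ℂ) = {x | MvPolynomial.eval x c = 0} := by
  ext x; simp [piece]

lemma piece_empty (c : MvPolynomial (Fin k) ℂ) :
    piece (∅ : Finset (MvPolynomial (Fin k) ℂ)) c = {x | MvPolynomial.eval x c ≠ 0} := by
  ext x; simp [piece]

lemma strat (s : Set (Fin k → ℂ)) (c : MvPolynomial (Fin k) ℂ) :
    s = (s ∩ piece {c} 1) ∪ (s ∩ piece ∅ c) := by
  rw [piece_singleton, piece_empty, ← Set.inter_union_distrib_left]
  ext x
  simp only [Set.mem_inter_iff, Set.mem_union, Set.mem_setOf_eq]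
  tauto

lemma E_nil (g : Poly k) :
    E ([] : List (Poly k)) g = ⋃ n ∈ g.support, piece ∅ (g.coeff n) := by
  ext x
  simp only [E, Set.mem_setOf_eq, List.not_mem_nil, false_implies, implies_true, true_and,
    Set.mem_iUnion, piece_empty]
  rw [exists_eval_ne_iff (pmap x g), pmap_ne_zero_iff]
  simp

lemma E_cons_zero (L : List (Poly k)) (g : Poly k) : E (0 :: L) g = E L g := by
  unfold E
  ext x
  simp [pmap]

lemma E_cons_C (c : MvPolynomial (Fin k) ℂ) (L : List (Poly k)) (g : Poly k) :
    E (Polynomial.C c :: L) g = piece {c} 1 ∩ E L g := by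
  rw [piece_singleton]
  unfold E
  ext x
  simp only [Set.mem_setOf_eq, List.mem_cons, Set.mem_inter_iff]
  constructor
  · rintro ⟨y, hy, hg⟩
    have := hy _ (Or.inl rfl)
    rw [pmap, map_C, eval_C] at this
    exact ⟨this, y, fun f hf => hy f (Or.inr hf), hg⟩
  · rintro ⟨hc, y, hy, hg⟩
    refine ⟨y, ?_, hg⟩
    rintro f (rfl | hf)
    · rw [pmap, map_C, eval_C]; exact hc
    · exact hy f hf

lemma pmap_eraseLead_of_lc_zero {f : Poly k} {x : Fin k → ℂ}
    (hc : MvPolynomial.eval x f.leadingCoeff = 0) : pmap x f = pmap x f.eraseLead := by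
  conv_lhs => rw [← f.eraseLead_add_C_mul_X_pow]
  rw [pmap, pmap, Polynomial.map_add, Polynomial.map_mul, Polynomial.map_C, hc,
    Polynomial.C_0, zero_mul, add_zero]

lemma E_eraseLead (f : Poly k) (L : List (Poly k)) (g : Poly k) :
    E (f :: L) g ∩ piece {f.leadingCoeff} 1
      = E (f.eraseLead :: L) g ∩ piece {f.leadingCoeff} 1 := by
  rw [piece_singleton]
  ext x
  simp only [Set.mem_inter_iff, Set.mem_setOf_eq, E, List.mem_cons, and_congr_left_iff]
  intro hc
  constructor
  · rintro ⟨y, hy, hg⟩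
    refine ⟨y, ?_, hg⟩
    rintro p (rfl | hp)
    · rw [← pmap_eraseLead_of_lc_zero hc]; exact hy f (Or.inl rfl)
    · exact hy p (Or.inr hp)
  · rintro ⟨y, hy, hg⟩
    refine ⟨y, ?_, hg⟩
    rintro p (rfl | hp)
    · rw [pmap_eraseLead_of_lc_zero hc]; exact hy _ (Or.inl rfl)
    · exact hy p (Or.inr hp)

lemma E_reduce (f h q r : Poly k) (e : ℕ)
    (hid : Polynomial.C f.leadingCoeff ^ e * h = q * f + r) (L : List (Poly k)) (g : Poly k) :
    E (f :: h :: L) g ∩ piece ∅ f.leadingCoeff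
      = E (f :: r :: L) g ∩ piece ∅ f.leadingCoeff := by
  rw [piece_empty]
  ext x
  simp only [Set.mem_inter_iff, Set.mem_setOf_eq, E, List.mem_cons, and_congr_left_iff]
  intro hc
  have key : ∀ y : ℂ, (pmap x f).eval y = 0 →
      ((pmap x h).eval y = 0 ↔ (pmap x r).eval y = 0) := by
    intro y hfy
    simp only [pmap] at hfy ⊢
    have := congrArg (fun p => ((pmap x p).eval y : ℂ)) hid
    simp only [pmap, Polynomial.map_mul, Polynomial.map_add, Polynomial.map_pow,
      Polynomial.map_C, eval_mul, eval_add, eval_pow, eval_C] at this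
    rw [hfy, mul_zero, zero_add] at this
    constructor
    · intro hh
      rw [← this, hh, mul_zero]
    · intro hr
      have := this.trans hr
      rcases mul_eq_zero.1 this with h1 | h2
      · exact absurd (pow_eq_zero_iff' .. |>.1 h1).1 hc
      · exact h2
  constructor
  · rintro ⟨y, hy, hg⟩
    have hfy := hy f (Or.inl rfl)
    refine ⟨y, ?_, hg⟩
    rintro p (rfl | rfl | hp)
    · exact hfy
    · exact (key y hfy).1 (hy h (Or.inr (Or.inl rfl)))
    · exact hy p (Or.inr (Or.inr hp))
  · rintro ⟨y, hy, hg⟩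
    have hfy := hy f (Or.inl rfl)
    refine ⟨y, ?_, hg⟩
    rintro p (rfl | rfl | hp)
    · exact hfy
    · exact (key y hfy).2 (hy r (Or.inr (Or.inl rfl)))
    · exact hy p (Or.inr (Or.inr hp))

lemma E_base (f g q r : Poly k) (e : ℕ) (hf : 0 < f.natDegree)
    (hid : Polynomial.C f.leadingCoeff ^ e * g ^ f.natDegree = q * f + r)
    (hr : r.degree < f.degree) :
    E [f] g ∩ piece ∅ f.leadingCoeff = ⋃ n ∈ r.support, piece ∅ (f.leadingCoeff * r.coeff n) := by
  classical
  have hf0 : f ≠ 0 := fun h0 => by simp [h0] at hf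
  rw [piece_empty]
  ext x
  simp only [Set.mem_inter_iff, Set.mem_setOf_eq, E, List.mem_cons, List.not_mem_nil, or_false,
    Set.mem_iUnion, piece_empty]
  constructor
  · rintro ⟨⟨y, hy, hg⟩, hc⟩
    -- show some coefficient of r is nonzero at x (together with c)
    have hfy : (pmap x f).eval y = 0 := hy f rfl
    -- the mapped identity evaluated at y
    have hidy := congrArg (fun p => ((pmap x p).eval y : ℂ)) hid
    simp only [pmap, Polynomial.map_mul, Polynomial.map_add, Polynomial.map_pow,
      Polynomial.map_C, eval_mul, eval_add, eval_pow, eval_C] at hidy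
    rw [show Polynomial.eval y (Polynomial.map (MvPolynomial.eval x) f) = 0 from hfy,
      mul_zero, zero_add] at hidy
    -- suppose r maps to zero; then fx ∣ gx ^ d, contradicting the escape
    have hrx : pmap x r ≠ 0 := by
      intro h0
      -- fx divides gx ^ d
      have hmap := congrArg (pmap x) hid
      simp only [pmap, Polynomial.map_mul, Polynomial.map_add, Polynomial.map_pow,
        Polynomial.map_C] at hmap
      rw [show Polynomial.map (MvPolynomial.eval x) r = 0 from h0, add_zero] at hmap
      have hdvd : Polynomial.map (MvPolynomial.eval x) f ∣
          Polynomial.map (MvPolynomial.eval x) g ^ f.natDegree := by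
        have hu : IsUnit (Polynomial.C (MvPolynomial.eval x f.leadingCoeff) ^ e) :=
          (Polynomial.isUnit_C.2 (isUnit_iff_ne_zero.2 hc)).pow e
        rcases hu with ⟨u, hu⟩
        have h5 : Polynomial.map (MvPolynomial.eval x) g ^ f.natDegree
            = ↑u⁻¹ * Polynomial.map (MvPolynomial.eval x) q
                * Polynomial.map (MvPolynomial.eval x) f := by
          rw [mul_assoc, ← hmap, ← hu, ← mul_assoc, Units.inv_mul, one_mul]
        rw [h5]
        exact Dvd.intro_left _ rfl
      obtain ⟨w, hw⟩ := hdvd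
      have : (Polynomial.map (MvPolynomial.eval x) g).eval y ^ f.natDegree = 0 := by
        rw [← eval_pow, hw, eval_mul,
          show Polynomial.eval y (Polynomial.map (MvPolynomial.eval x) f) = 0 from hfy, zero_mul]
      exact hg (by rw [pmap]; exact pow_eq_zero_iff hf.ne' |>.1 this)
    rw [pmap_ne_zero_iff] at hrx
    obtain ⟨n, hn, hne⟩ := hrx
    exact ⟨n, hn, by rw [map_mul]; exact mul_ne_zero hc hne⟩
  · rintro ⟨n, hn, hne⟩
    rw [map_mul, mul_ne_zero_iff] at hne
    obtain ⟨hc, hrn⟩ := hne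
    refine ⟨?_, hc⟩
    -- fx has positive degree and leading coefficient eval x c
    set fx := pmap x f with hfx
    have hlc : fx.coeff f.natDegree = MvPolynomial.eval x f.leadingCoeff := by
      rw [hfx, pmap, Polynomial.coeff_map, Polynomial.leadingCoeff]
    have hfx0 : fx ≠ 0 := fun h0 => hc (by rw [← hlc, h0, Polynomial.coeff_zero])
    have hdeg : fx.natDegree = f.natDegree := by
      rw [hfx, pmap]
      exact Polynomial.natDegree_map_of_leadingCoeff_ne_zero _ hc
    have hdegdeg : fx.degree = f.degree := by
      rw [hfx, pmap]
      exact Polynomial.degree_map_eq_of_leadingCoeff_ne_zero _ hc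
    have hfxpos : 0 < fx.natDegree := hdeg ▸ hf
    -- not divisible
    have hnotdvd : ¬ fx ∣ pmap x g ^ fx.natDegree := by
      rw [hdeg]
      intro hdvd
      -- then r maps to 0 at x, contradiction with hrn
      have hmap := congrArg (pmap x) hid
      simp only [pmap, Polynomial.map_mul, Polynomial.map_add, Polynomial.map_pow,
        Polynomial.map_C] at hmap
      have hdvdr : fx ∣ pmap x r := by
        have h3 : pmap x r = Polynomial.C (MvPolynomial.eval x f.leadingCoeff) ^ e
            * Polynomial.map (MvPolynomial.eval x) g ^ f.natDegree
            - Polynomial.map (MvPolynomial.eval x) q * fx := by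
          rw [pmap, hmap, hfx, pmap]; ring
        rw [h3]
        exact dvd_sub (Dvd.dvd.mul_left (by rw [hfx, pmap] at hdvd ⊢; exact hdvd) _)
          (Dvd.intro_left _ rfl)
      have : pmap x r = 0 := by
        refine Polynomial.eq_zero_of_dvd_of_degree_lt hdvdr ?_
        calc (pmap x r).degree ≤ r.degree := Polynomial.degree_map_le
          _ < f.degree := hr
          _ = fx.degree := hdegdeg.symm
      rw [pmap_eval_zero_iff] at this
      exact hrn (this n hn)
    rw [← hdeg] at hf
    have := (exists_root_escape fx (pmap x g) (hdeg ▸ hfxpos)).2 hnotdvd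
    obtain ⟨y, hy1, hy2⟩ := this
    exact ⟨y, fun p hp => by rw [hp]; exact hy1, hy2⟩

/-- The measure for the elimination induction. -/
noncomputable def mu (L : List (Poly k)) : ℕ := (L.map fun f => f.natDegree + 1).sum

lemma mu_perm {L L' : List (Poly k)} (h : L.Perm L') : mu L = mu L' := (h.map _).sum_eq

lemma mu_cons (f : Poly k) (L : List (Poly k)) : mu (f :: L) = f.natDegree + 1 + mu L := by
  simp [mu]

/-- The key elimination result: `E L g` is constructible. -/
lemma con_E (L : List (Poly k)) (g : Poly k) : Con (E L g) := by
  classical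
  generalize hN : mu L = N
  induction N using Nat.strong_induction_on generalizing L g with
  | _ N ih =>
  subst hN
  by_cases h0 : (0 : Poly k) ∈ L
  · have hperm := List.perm_cons_erase h0
    rw [E_congr (fun f => hperm.mem_iff) g, E_cons_zero]
    refine ih (mu (L.erase 0)) ?_ _ _ rfl
    rw [mu_perm hperm, mu_cons]
    omega
  by_cases hconst : ∃ f ∈ L, f.natDegree = 0
  · obtain ⟨f, hfL, hfd⟩ := hconst
    have hperm := List.perm_cons_erase hfL
    rw [E_congr (fun p => hperm.mem_iff) g]
    have hE : E (f :: L.erase f) g = piece {f.coeff 0} 1 ∩ E (L.erase f) g := by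
      nth_rewrite 1 [Polynomial.eq_C_of_natDegree_eq_zero hfd]
      exact E_cons_C _ _ _
    rw [hE]
    refine (con_piece _ _).inter (ih (mu (L.erase f)) ?_ _ _ rfl)
    rw [mu_perm hperm, mu_cons]
    omega
  push_neg at hconst
  rcases eq_or_ne L [] with rfl | hL
  · rw [E_nil]
    exact Con.biUnion _ _ fun n _ => con_piece _ _
  obtain ⟨f₀, hf₀⟩ := List.exists_mem_of_ne_nil L hL
  obtain ⟨f, hfL, hfmin⟩ := L.toFinset.exists_min_image Polynomial.natDegree
    ⟨f₀, List.mem_toFinset.2 hf₀⟩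
  rw [List.mem_toFinset] at hfL
  have hfmin' : ∀ p ∈ L, f.natDegree ≤ p.natDegree := fun p hp =>
    hfmin p (List.mem_toFinset.2 hp)
  have hfd : 0 < f.natDegree := Nat.pos_of_ne_zero (hconst f hfL)
  have hperm := List.perm_cons_erase hfL
  have hmuL : mu L = f.natDegree + 1 + mu (L.erase f) := by rw [mu_perm hperm, mu_cons]
  rw [E_congr (fun p => hperm.mem_iff) g, strat (E (f :: L.erase f) g) f.leadingCoeff]
  apply Con.union
  · -- stratum where the leading coefficient vanishes
    rw [E_eraseLead]
    refine (ih (mu (f.eraseLead :: L.erase f)) ?_ _ _ rfl).inter (con_piece _ _)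
    rw [mu_cons, hmuL]
    have := Polynomial.eraseLead_natDegree_le f
    omega
  · -- stratum where the leading coefficient does not vanish
    rcases eq_or_ne (L.erase f) [] with herase | herase
    · rw [herase]
      obtain ⟨e, q, r, hid, hr⟩ := pseudo_div f hfd (g ^ f.natDegree)
      rw [E_base f g q r e hfd hid hr]
      exact Con.biUnion _ _ fun n _ => con_piece _ _
    · obtain ⟨h, hh⟩ := List.exists_mem_of_ne_nil _ herase
      have hperm2 := List.perm_cons_erase hh
      have hhL : h ∈ L := List.mem_of_mem_erase hh
      have hmem : ∀ p, p ∈ f :: L.erase f ↔ p ∈ f :: h :: (L.erase f).erase h := by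
        intro p
        rw [List.mem_cons, List.mem_cons, hperm2.mem_iff, List.mem_cons]
      rw [E_congr hmem g]
      obtain ⟨e, q, r, hid, hr⟩ := pseudo_div f hfd h
      rw [E_reduce f h q r e hid _ g]
      refine (ih (mu (f :: r :: (L.erase f).erase h)) ?_ _ _ rfl).inter (con_piece _ _)
      have hmu2 : mu (L.erase f) = h.natDegree + 1 + mu ((L.erase f).erase h) :=
        by rw [mu_perm hperm2, mu_cons]
      have hrh : r.natDegree < h.natDegree := by
        rcases eq_or_ne r 0 with rfl | hr0
        · simpa using Nat.pos_of_ne_zero (hconst h hhL)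
        · exact lt_of_lt_of_le (Polynomial.natDegree_lt_natDegree hr0 hr) (hfmin' h hhL)
      rw [mu_cons, mu_cons, hmuL, hmu2]
      omega

/-- Constructible sets pull back under variable substitution maps. -/
lemma Con.precomp {a b : ℕ} (σ : Fin a → Fin b) {t : Set (Fin a → ℂ)} (ht : Con t) :
    Con {x : Fin b → ℂ | x ∘ σ ∈ t} := by
  classical
  obtain ⟨𝒮, rfl⟩ := ht
  have : {x : Fin b → ℂ | x ∘ σ ∈ ⋃ p ∈ 𝒮, piece p.1 p.2}
      = ⋃ p ∈ 𝒮, {x : Fin b → ℂ | x ∘ σ ∈ piece p.1 p.2} := by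
    ext x; simp
  rw [this]
  refine Con.biUnion _ _ fun p _ => ?_
  have : {x : Fin b → ℂ | x ∘ σ ∈ piece p.1 p.2}
      = piece (p.1.image (MvPolynomial.rename σ)) (MvPolynomial.rename σ p.2) := by
    ext x
    simp only [Set.mem_setOf_eq, piece, Finset.mem_image]
    constructor
    · rintro ⟨h1, h2⟩
      refine ⟨?_, by rwa [MvPolynomial.eval_rename]⟩
      rintro f ⟨f₀, hf₀, rfl⟩
      rw [MvPolynomial.eval_rename]
      exact h1 f₀ hf₀
    · rintro ⟨h1, h2⟩
      refine ⟨fun f hf => ?_, by rwa [MvPolynomial.eval_rename] at h2⟩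
      have := h1 (MvPolynomial.rename σ f) ⟨f, hf, rfl⟩
      rwa [MvPolynomial.eval_rename] at this
  rw [this]
  exact con_piece _ _

/-- Projecting out the first coordinate preserves constructibility. -/
lemma Con.proj1 {k : ℕ} {t : Set (Fin (k + 1) → ℂ)} (ht : Con t) :
    Con {x : Fin k → ℂ | ∃ y : ℂ, Fin.cons y x ∈ t} := by
  classical
  obtain ⟨𝒮, rfl⟩ := ht
  have : {x : Fin k → ℂ | ∃ y : ℂ, Fin.cons y x ∈ ⋃ p ∈ 𝒮, piece p.1 p.2}
      = ⋃ p ∈ 𝒮, {x : Fin k → ℂ | ∃ y : ℂ, Fin.cons y x ∈ piece p.1 p.2} := by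
    ext x
    simp only [Set.mem_setOf_eq, Set.mem_iUnion]
    tauto
  rw [this]
  refine Con.biUnion _ _ fun p _ => ?_
  have : {x : Fin k → ℂ | ∃ y : ℂ, Fin.cons y x ∈ piece p.1 p.2}
      = E (p.1.toList.map (MvPolynomial.finSuccEquiv ℂ k)) (MvPolynomial.finSuccEquiv ℂ k p.2) := by
    ext x
    simp only [Set.mem_setOf_eq, piece, E, List.mem_map, Finset.mem_toList]
    constructor
    · rintro ⟨y, h1, h2⟩
      refine ⟨y, ?_, ?_⟩
      · rintro q ⟨f, hf, rfl⟩
        rw [pmap, ← MvPolynomial.eval_eq_eval_mv_eval']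
        exact h1 f hf
      · rw [pmap, ← MvPolynomial.eval_eq_eval_mv_eval']
        exact h2
    · rintro ⟨y, h1, h2⟩
      refine ⟨y, fun f hf => ?_, ?_⟩
      · have := h1 _ ⟨f, hf, rfl⟩
        rwa [pmap, ← MvPolynomial.eval_eq_eval_mv_eval'] at this
      · rwa [pmap, ← MvPolynomial.eval_eq_eval_mv_eval'] at h2
  rw [this]
  exact con_E _ _

/-- Projecting out a block of leading coordinates preserves constructibility. -/
lemma Con.proj_many : ∀ (d : ℕ) {k : ℕ} (t : Set (Fin (d + k) → ℂ)), Con t →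
    Con {x : Fin k → ℂ | ∃ w : Fin d → ℂ, Fin.append w x ∈ t} := by
  intro d
  induction d with
  | zero =>
    intro k t ht
    have : {x : Fin k → ℂ | ∃ w : Fin 0 → ℂ, Fin.append w x ∈ t}
        = {x : Fin k → ℂ | x ∘ Fin.cast (Nat.zero_add k) ∈ t} := by
      ext x
      simp only [Set.mem_setOf_eq]
      constructor
      · rintro ⟨w, hw⟩
        rwa [Subsingleton.elim w Fin.elim0, Fin.elim0_append] at hw
      · intro h
        exact ⟨Fin.elim0, by rwa [Fin.elim0_append]⟩
    rw [this]
    exact Con.precomp _ ht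
  | succ d ih =>
    intro k t ht
    have ht'' : Con {z : Fin (d + k + 1) → ℂ | z ∘ Fin.cast (Nat.add_right_comm d 1 k) ∈ t} :=
      Con.precomp _ ht
    have hu : Con {z : Fin (d + k) → ℂ | ∃ a : ℂ,
        Fin.cons a z ∈ {z : Fin (d + k + 1) → ℂ | z ∘ Fin.cast (Nat.add_right_comm d 1 k) ∈ t}} :=
      Con.proj1 ht''
    have := ih _ hu
    have heq : {x : Fin k → ℂ | ∃ w : Fin (d + 1) → ℂ, Fin.append w x ∈ t}
        = {x : Fin k → ℂ | ∃ w : Fin d → ℂ, Fin.append w x ∈ {z : Fin (d + k) → ℂ | ∃ a : ℂ,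
            Fin.cons a z ∈ {z : Fin (d + k + 1) → ℂ |
              z ∘ Fin.cast (Nat.add_right_comm d 1 k) ∈ t}}} := by
      ext x
      simp only [Set.mem_setOf_eq]
      constructor
      · rintro ⟨w, hw⟩
        refine ⟨Fin.tail w, w 0, ?_⟩
        rw [← Fin.append_cons, Fin.cons_self_tail]
        exact hw
      · rintro ⟨w, a, hw⟩
        exact ⟨Fin.cons a w, by rwa [Fin.append_cons]⟩
    rw [heq]
    exact this

end Chev

open MvPolynomial

/-- The affine variety in `ℂ^d` cut out by a set of polynomials. -/
def zeroSet {d : ℕ} (S : Set (MvPolynomial (Fin d) ℂ)) : Set (Fin d → ℂ) :=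
  {x | ∀ f ∈ S, eval x f = 0}

/-- A constructible set: a finite union of Zariski locally closed sets,
i.e. of sets of the form (complement of a variety) ∩ (variety). -/
def IsConstructible' {d : ℕ} (s : Set (Fin d → ℂ)) : Prop :=
  ∃ (m : ℕ) (A B : Fin m → Set (MvPolynomial (Fin d) ℂ)),
    s = ⋃ i, ((zeroSet (A i))ᶜ ∩ zeroSet (B i))

namespace Chev

lemma zeroSet_span {d : ℕ} (S : Set (MvPolynomial (Fin d) ℂ)) :
    zeroSet S = zeroSet (Ideal.span S : Set (MvPolynomial (Fin d) ℂ)) := by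
  ext x
  constructor
  · intro h f hf
    refine Submodule.span_induction (fun g hg => h g hg) (map_zero _) ?_ ?_ hf
    · intro a b _ _ ha hb
      rw [map_add, ha, hb, add_zero]
    · intro a b _ hb
      rw [smul_eq_mul, map_mul, hb, mul_zero]
  · intro h f hf
    exact h f (Ideal.subset_span hf)

lemma zeroSet_finset {d : ℕ} (S : Set (MvPolynomial (Fin d) ℂ)) :
    ∃ G : Finset (MvPolynomial (Fin d) ℂ), zeroSet S = zeroSet ↑G := by
  have hfg : (Ideal.span S).FG := (isNoetherian_def.1 inferInstance) _
  obtain ⟨G, hG⟩ := hfg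
  refine ⟨G, ?_⟩
  rw [zeroSet_span S, zeroSet_span (↑G : Set (MvPolynomial (Fin d) ℂ))]
  rw [show Ideal.span (↑G : Set (MvPolynomial (Fin d) ℂ)) = Ideal.span S from hG]

lemma con_zeroSet {d : ℕ} (S : Set (MvPolynomial (Fin d) ℂ)) : Con (zeroSet S) := by
  obtain ⟨G, hG⟩ := zeroSet_finset S
  rw [hG]
  have : zeroSet (↑G : Set (MvPolynomial (Fin d) ℂ)) = piece G 1 := by
    ext x
    simp [zeroSet, piece]
  rw [this]
  exact con_piece _ _

lemma con_zeroSet_compl {d : ℕ} (S : Set (MvPolynomial (Fin d) ℂ)) : Con (zeroSet S)ᶜ := by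
  classical
  obtain ⟨G, hG⟩ := zeroSet_finset S
  rw [hG]
  have : (zeroSet (↑G : Set (MvPolynomial (Fin d) ℂ)))ᶜ = ⋃ f ∈ G, piece ∅ f := by
    ext x
    simp only [zeroSet, Set.mem_compl_iff, Set.mem_setOf_eq, Set.mem_iUnion, piece,
      Finset.notMem_empty, false_implies, implies_true, true_and, Finset.mem_coe]
    push_neg
    tauto
  rw [this]
  exact Con.biUnion _ _ fun f _ => con_piece _ _

lemma con_of_isConstructible {d : ℕ} {s : Set (Fin d → ℂ)} (hs : IsConstructible' s) :
    Con s := by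
  obtain ⟨m, A, B, rfl⟩ := hs
  exact Con.iUnion_fin _ fun i => (con_zeroSet_compl (A i)).inter (con_zeroSet (B i))

lemma isConstructible_of_con {d : ℕ} {s : Set (Fin d → ℂ)} (hs : Con s) :
    IsConstructible' s := by
  classical
  obtain ⟨𝒮, rfl⟩ := hs
  refine ⟨𝒮.card, fun i => {(𝒮.equivFin.symm i).1.2}, fun i => ↑(𝒮.equivFin.symm i).1.1, ?_⟩
  have hpiece : ∀ (F : Finset (MvPolynomial (Fin d) ℂ)) (g : MvPolynomial (Fin d) ℂ),
      piece F g = (zeroSet {g})ᶜ ∩ zeroSet ↑F := by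
    intro F g
    ext x
    simp only [piece, Set.mem_setOf_eq, Set.mem_inter_iff, Set.mem_compl_iff, zeroSet,
      Set.mem_singleton_iff, Finset.mem_coe]
    constructor
    · rintro ⟨h1, h2⟩
      exact ⟨fun h => h2 (h g rfl), h1⟩
    · rintro ⟨h1, h2⟩
      exact ⟨h2, fun h => h1 (fun f hf => hf ▸ h)⟩
  ext x
  simp only [Set.mem_iUnion]
  constructor
  · rintro ⟨p, hp, hx⟩
    refine ⟨𝒮.equivFin ⟨p, hp⟩, ?_⟩
    rw [← hpiece]
    simpa using hx
  · rintro ⟨i, hx⟩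
    rw [← hpiece] at hx
    exact ⟨(𝒮.equivFin.symm i).1, (𝒮.equivFin.symm i).2, hx⟩

end Chev

/-- Chevalley's theorem: the image of a constructible subset of `ℂ^d` under a
polynomial map `ℂ^d → ℂ^n` is constructible. -/
theorem stmt_3 (d n : ℕ) (P : Fin n → MvPolynomial (Fin d) ℂ)
    (s : Set (Fin d → ℂ)) (hs : IsConstructible' s) :
    IsConstructible' ((fun x (i : Fin n) => eval x (P i)) '' s) := by
  classical
  have hcon : Chev.Con s := Chev.con_of_isConstructible hs
  set q : Fin n → MvPolynomial (Fin (d + n)) ℂ :=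
    fun i => X (Fin.natAdd d i) - rename (Fin.castAdd n) (P i) with hq
  set T : Set (Fin (d + n) → ℂ) :=
    {z | z ∘ Fin.castAdd n ∈ s} ∩ Chev.piece (Finset.univ.image q) 1 with hT
  have hconT : Chev.Con T := (Chev.Con.precomp _ hcon).inter (Chev.con_piece _ _)
  have himg : ((fun x (i : Fin n) => eval x (P i)) '' s)
      = {y : Fin n → ℂ | ∃ w : Fin d → ℂ, Fin.append w y ∈ T} := by
    ext y
    simp only [Set.mem_image, Set.mem_setOf_eq, hT, Set.mem_inter_iff, Chev.piece,
      Finset.mem_image, Finset.mem_univ, true_and, map_one, ne_eq, one_ne_zero,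
      not_false_eq_true, and_true]
    constructor
    · rintro ⟨x, hx, rfl⟩
      refine ⟨x, ?_, ?_⟩
      · have : Fin.append x (fun i => eval x (P i)) ∘ Fin.castAdd n = x := by
          funext i
          simp [Fin.append_left]
        rwa [this]
      · rintro p ⟨i, rfl⟩
        rw [hq]
        simp only [map_sub, MvPolynomial.eval_X]
        rw [Fin.append_right]
        have : (Fin.append x (fun i => eval x (P i))) ∘ Fin.castAdd n = x := by
          funext j
          simp [Fin.append_left]
        rw [eval_rename, this, sub_self]
    · rintro ⟨w, hw1, hw2⟩
      have hcomp : Fin.append w y ∘ Fin.castAdd n = w := by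
        funext j
        simp [Fin.append_left]
      rw [hcomp] at hw1
      refine ⟨w, hw1, ?_⟩
      funext i
      have := hw2 (q i) ⟨i, rfl⟩
      rw [hq] at this
      simp only [map_sub, MvPolynomial.eval_X] at this
      rw [Fin.append_right, eval_rename, hcomp, sub_eq_zero] at this
      exact this.symm
  rw [himg]
  exact Chev.isConstructible_of_con (Chev.Con.proj_many d T hconT)
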